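/- Consider the cooperative game on N = {g, u_1, ..., u_n} with ν(S) = 0 if g ∉ S and ν(S) = ρ·|S \ {g}|² if g ∈ S (Metcalfe value, k = 2), where ρ > 0. Then the founder's Shapley value is exactly φ_g(ν) = ρ·n(2n+1)/6, and consequently φ_g(ν)/ν(N) → 1/3 as n → ∞. -/

import Mathlib

open Finset Filter Topology

/-- The Shapley value of player `i` in the cooperative game with player set `N`
and value function `ν`. -/
noncomputable def shapley {α : Type*} [DecidableEq α] (N : Finset α) (ν : Finset α → ℝ)
    (i : α) : ℝ :=
  ∑ S ∈ (N.erase i).powerset,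
    (((S.card.factorial : ℝ) * ((N.card - S.card - 1).factorial : ℝ)) / (N.card.factorial : ℝ)) *
      (ν (insert i S) - ν S)

lemma sum_sq_aux (n : ℕ) :
    ∑ m ∈ Finset.range (n + 1), (m : ℝ) ^ 2 = n * (n + 1) * (2 * n + 1) / 6 := by
  induction n with
  | zero => simp
  | succ k ih => rw [Finset.sum_range_succ, ih]; push_cast; ring

theorem stmt_3 (ρ : ℝ) (hρ : 0 < ρ)
    (ν : ∀ n : ℕ, Finset (Option (Fin n)) → ℝ)
    (hν : ∀ n S, ν n S = if none ∈ S then ρ * ((S.erase none).card : ℝ) ^ 2 else 0) :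
    (∀ n : ℕ, shapley Finset.univ (ν n) none = ρ * (n * (2 * n + 1)) / 6) ∧
    Filter.Tendsto (fun n : ℕ => shapley Finset.univ (ν n) none / ν n Finset.univ)
      Filter.atTop (nhds (1 / 3)) := by
  have hcard : ∀ n : ℕ, (Finset.univ : Finset (Option (Fin n))).card = n + 1 := by
    intro n; simp [Finset.card_univ]
  have hecard : ∀ n : ℕ, ((Finset.univ : Finset (Option (Fin n))).erase none).card = n := by
    intro n; rw [Finset.card_erase_of_mem (Finset.mem_univ _), hcard]; omega
  have hmain : ∀ n : ℕ, shapley Finset.univ (ν n) none = ρ * (n * (2 * n + 1)) / 6 := by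
    intro n
    have step : shapley (Finset.univ : Finset (Option (Fin n))) (ν n) none =
        ∑ S ∈ ((Finset.univ : Finset (Option (Fin n))).erase none).powerset,
          (((S.card.factorial : ℝ) * ((n - S.card).factorial : ℝ)) / ((n + 1).factorial : ℝ)) *
            (ρ * (S.card : ℝ) ^ 2) := by
      unfold shapley
      refine Finset.sum_congr rfl fun S hS => ?_
      rw [Finset.mem_powerset] at hS
      have hnone : none ∉ S := fun h => (Finset.mem_erase.1 (hS h)).1 rfl
      have h1 : ν n (insert none S) = ρ * (S.card : ℝ) ^ 2 := by
        rw [hν]; simp [Finset.erase_insert hnone]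
      have h2 : ν n S = 0 := by rw [hν]; simp [hnone]
      have hle : S.card ≤ n := by
        have := Finset.card_le_card hS; rwa [hecard] at this
      rw [h1, h2, hcard, sub_zero]
      have : n + 1 - S.card - 1 = n - S.card := by omega
      rw [this]
    rw [step]
    have := Finset.sum_powerset_apply_card
      (fun k : ℕ => (((k.factorial : ℝ) * ((n - k).factorial : ℝ)) / ((n + 1).factorial : ℝ)) *
        (ρ * (k : ℝ) ^ 2))
      (x := (Finset.univ : Finset (Option (Fin n))).erase none)
    rw [this, hecard]
    have key : ∀ m ∈ Finset.range (n + 1),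
        (n.choose m) • ((((m.factorial : ℝ) * ((n - m).factorial : ℝ)) / ((n + 1).factorial : ℝ)) *
          (ρ * (m : ℝ) ^ 2)) = ρ / (n + 1) * (m : ℝ) ^ 2 := by
      intro m hm
      rw [Finset.mem_range, Nat.lt_succ_iff] at hm
      have hfact : (n.choose m : ℝ) * (m.factorial : ℝ) * ((n - m).factorial : ℝ)
          = (n.factorial : ℝ) := by
        rw [← Nat.cast_mul, ← Nat.cast_mul, Nat.choose_mul_factorial_mul_factorial hm]
      have hnp1 : ((n + 1).factorial : ℝ) = (n + 1) * (n.factorial : ℝ) := by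
        rw [Nat.factorial_succ]; push_cast; ring
      have h0 : (n.factorial : ℝ) ≠ 0 := Nat.cast_ne_zero.2 (Nat.factorial_ne_zero n)
      have h1 : ((n : ℝ) + 1) ≠ 0 := by positivity
      rw [nsmul_eq_mul, hnp1]
      field_simp
      linear_combination (m : ℝ) ^ 2 * hfact
    rw [Finset.sum_congr rfl key, ← Finset.mul_sum, sum_sq_aux]
    have h1 : ((n : ℝ) + 1) ≠ 0 := by positivity
    field_simp
  refine ⟨hmain, ?_⟩
  have hN : ∀ n : ℕ, ν n Finset.univ = ρ * (n : ℝ) ^ 2 := by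
    intro n; rw [hν]; simp [hecard]
  have heq : ∀ᶠ n : ℕ in atTop,
      shapley Finset.univ (ν n) none / ν n Finset.univ = 1 / 3 + 1 / (6 * n) := by
    filter_upwards [eventually_ge_atTop 1] with n hn
    rw [hmain, hN]
    have hn' : (0 : ℝ) < n := by exact_mod_cast hn
    have hρ' : ρ ≠ 0 := ne_of_gt hρ
    have hn0 : (n : ℝ) ≠ 0 := ne_of_gt hn'
    field_simp
    ring
  rw [Filter.tendsto_congr' heq]
  have : Filter.Tendsto (fun n : ℕ => 1 / (6 * (n : ℝ))) atTop (nhds 0) := by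
    have hfun : (fun n : ℕ => 1 / (6 * (n : ℝ))) = fun n : ℕ => (1 / 6) * (1 / (n : ℝ)) := by
      funext n; rw [one_div, one_div, one_div, mul_inv]
    rw [hfun]
    simpa using (tendsto_one_div_atTop_nhds_zero_nat).const_mul (1 / 6 : ℝ)
  simpa using tendsto_const_nhds.add this
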